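/- For positive integers n and k ≥ 2, ∫₀¹ x^{2n-1} A(k;x) dx = ∑_{j=1}^{k-1} (-1)^{j-1} T(k+1-j)/(2n)^j + (-1)^{k-1} T_n(1)/(2n)^k, where A(k;x) = 2∑_{m=1}^∞ x^{2m-1}/(2m-1)^k, T(s) = 2∑_{m=1}^∞ 1/(2m-1)^s, and T_n(1) = 2∑_{m=1}^n 1/(2m-1). -/

import Mathlib

open Finset Filter MeasureTheory

/-- The depth-one Kaneko–Tsumura A-function `A(k;x) = 2 ∑_{m≥1} x^{2m-1}/(2m-1)^k`. -/
noncomputable def Afun (k : ℕ) (x : ℝ) : ℝ :=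
  2 * ∑' m : ℕ, x ^ (2 * m + 1) / (2 * (m : ℝ) + 1) ^ k

/-- Depth-one multiple T-value `T(s) = 2 ∑_{m≥1} 1/(2m-1)^s`. -/
noncomputable def Tval (s : ℕ) : ℝ := 2 * ∑' m : ℕ, (1 : ℝ) / (2 * (m : ℝ) + 1) ^ s

/-- `T_n(1) = 2 ∑_{m=1}^n 1/(2m-1)`. -/
noncomputable def Tn1 (n : ℕ) : ℝ := 2 * ∑ m ∈ Finset.Icc 1 n, (1 : ℝ) / (2 * (m : ℝ) - 1)

lemma summable_odd_pow {s : ℕ} (hs : 2 ≤ s) :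
    Summable (fun m : ℕ => 1 / (2 * (m : ℝ) + 1) ^ s) := by
  have h2 : Summable (fun m : ℕ => 1 / ((m : ℝ) + 1) ^ 2) := by
    have := (Real.summable_one_div_nat_pow (p := 2)).mpr (by norm_num)
    have := (summable_nat_add_iff 1).mpr this
    simpa using this
  refine Summable.of_nonneg_of_le (fun m => by positivity) (fun m => ?_) h2
  apply one_div_le_one_div_of_le (by positivity)
  calc ((m:ℝ) + 1) ^ 2 ≤ ((m:ℝ) + 1) ^ s := by
        apply pow_le_pow_right₀ (by linarith [Nat.cast_nonneg (α := ℝ) m]) hs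
    _ ≤ (2 * (m:ℝ) + 1) ^ s := by
        apply pow_le_pow_left₀ (by positivity) (by linarith [Nat.cast_nonneg (α := ℝ) m])

lemma telescope_hasSum (n : ℕ) :
    HasSum (fun m : ℕ => 1 / (2 * (m : ℝ) + 1) - 1 / (2 * ((m + n : ℕ) : ℝ) + 1))
      (∑ m ∈ Finset.range n, 1 / (2 * (m : ℝ) + 1)) := by
  set f : ℕ → ℝ := fun m => 1 / (2 * (m : ℝ) + 1) with hf
  have hfnonneg : ∀ m, 0 ≤ f m := fun m => by positivity
  have hfanti : ∀ {a b : ℕ}, a ≤ b → f b ≤ f a := by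
    intro a b hab
    apply one_div_le_one_div_of_le (by positivity)
    have : (a:ℝ) ≤ b := by exact_mod_cast hab
    linarith
  have hnonneg : ∀ m : ℕ, 0 ≤ f m - f (m + n) := fun m => by
    have := hfanti (Nat.le_add_right m n); linarith
  rw [hasSum_iff_tendsto_nat_of_nonneg hnonneg]
  have htail : Tendsto (fun N : ℕ => ∑ i ∈ Finset.Ico N (N + n), f i) atTop (nhds 0) := by
    have hub : ∀ N : ℕ, ∑ i ∈ Finset.Ico N (N + n), f i ≤ n * f N := by
      intro N
      have := Finset.sum_le_card_nsmul (Finset.Ico N (N + n)) f (f N)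
        (fun x hx => hfanti (Finset.mem_Ico.mp hx).1)
      simpa [Nat.card_Ico, nsmul_eq_mul] using this
    have hlb : ∀ N : ℕ, 0 ≤ ∑ i ∈ Finset.Ico N (N + n), f i :=
      fun N => Finset.sum_nonneg fun i _ => hfnonneg i
    have hfN : Tendsto (fun N : ℕ => (n : ℝ) * f N) atTop (nhds 0) := by
      have h1 : Tendsto (fun N : ℕ => 2 * (N : ℝ) + 1) atTop atTop := by
        apply Filter.tendsto_atTop_add_const_right
        exact (tendsto_natCast_atTop_atTop).const_mul_atTop (by norm_num)
      have := h1.inv_tendsto_atTop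
      have h2 : Tendsto f atTop (nhds 0) := by simpa [hf, one_div, Pi.inv_def] using this
      simpa [hf, one_div] using h2.const_mul (n : ℝ)
    exact tendsto_of_tendsto_of_tendsto_of_le_of_le tendsto_const_nhds hfN hlb hub
  have heq : ∀ᶠ N : ℕ in atTop, ∑ m ∈ Finset.range n, f m - ∑ i ∈ Finset.Ico N (N + n), f i
      = ∑ i ∈ Finset.range N, (f i - f (i + n)) := by
    filter_upwards [eventually_ge_atTop n] with N hN
    rw [Finset.sum_sub_distrib]
    have h1 : ∑ i ∈ Finset.range N, f (i + n) = ∑ i ∈ Finset.Ico n (N + n), f i := by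
      rw [Finset.sum_Ico_eq_sum_range]
      simp [add_comm, Nat.add_sub_cancel]
    have h2 : ∑ i ∈ Finset.range N, f i
        = ∑ m ∈ Finset.range n, f m + ∑ i ∈ Finset.Ico n N, f i := by
      rw [Finset.range_eq_Ico, ← Finset.sum_Ico_consecutive f (Nat.zero_le n) hN,
        ← Finset.range_eq_Ico]
    have h3 : ∑ i ∈ Finset.Ico n (N + n), f i
        = ∑ i ∈ Finset.Ico n N, f i + ∑ i ∈ Finset.Ico N (N + n), f i := by
      rw [Finset.sum_Ico_consecutive f hN (by omega)]
    rw [h1, h2, h3]; ring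
  have := (htail.const_sub (∑ m ∈ Finset.range n, f m)).congr' heq
  simpa using this

lemma partial_frac (a c : ℝ) (ha : a ≠ 0) (hc : c ≠ 0) (hac : a + c ≠ 0) :
    ∀ k : ℕ, 1 / (a ^ (k + 1) * (a + c))
      = (∑ i ∈ Finset.range k, (-1 : ℝ) ^ i / (c ^ (i + 1) * a ^ (k + 1 - i)))
        + (-1 : ℝ) ^ k / c ^ (k + 1) * (1 / a - 1 / (a + c)) := by
  intro k
  induction k with
  | zero => simp only [Finset.range_zero, Finset.sum_empty, zero_add, pow_zero, pow_one]
            field_simp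
            ring
  | succ k ih =>
    have key : 1 / (a ^ (k + 2) * (a + c))
        = 1 / (c * a ^ (k + 2)) - (1 / c) * (1 / (a ^ (k + 1) * (a + c))) := by
      have hak : a ^ (k+1) ≠ 0 := pow_ne_zero _ ha
      field_simp
      ring
    rw [key, ih, Finset.sum_range_succ']
    have hshift : ∀ i ∈ Finset.range k,
        (-1 : ℝ) ^ (i+1) / (c ^ (i + 1 + 1) * a ^ (k + 1 + 1 - (i+1)))
          = -(1/c) * ((-1:ℝ) ^ i / (c ^ (i + 1) * a ^ (k + 1 - i))) := by
      intro i hi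
      have h : k + 1 + 1 - (i + 1) = k + 1 - i := by omega
      rw [h, pow_succ, pow_succ]
      field_simp
    rw [Finset.sum_congr rfl hshift]
    have h0 : (-1:ℝ)^0 / (c ^ (0+1) * a ^ (k + 1 + 1 - 0)) = 1 / (c * a ^ (k+2)) := by
      norm_num
    rw [h0, ← Finset.mul_sum]
    rw [pow_succ (-1:ℝ) k, pow_succ c (k+1)]
    ring

lemma integral_Ioc_pow (p : ℕ) : ∫ x in Set.Ioc (0:ℝ) 1, x ^ p = 1 / ((p : ℝ) + 1) := by
  rw [← intervalIntegral.integral_of_le zero_le_one, integral_pow]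
  norm_num

lemma integral_eq (n k : ℕ) (hn : 0 < n) (hk : 2 ≤ k) :
    ∫ x in (0:ℝ)..1, x ^ (2 * n - 1) * Afun k x
      = 2 * ∑' m : ℕ, 1 / ((2 * (m : ℝ) + 1) ^ k * (2 * (((m + n : ℕ)) : ℝ) + 1)) := by
  have hptwise : ∀ x : ℝ, x ^ (2 * n - 1) * Afun k x
      = 2 * ∑' m : ℕ, x ^ (2 * (n + m)) / (2 * (m : ℝ) + 1) ^ k := by
    intro x
    unfold Afun
    rw [mul_left_comm, ← tsum_mul_left]
    congr 1
    apply tsum_congr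
    intro m
    rw [← mul_div_assoc, ← pow_add]
    congr 2
    omega
  simp only [hptwise]
  rw [intervalIntegral.integral_const_mul, intervalIntegral.integral_of_le zero_le_one]
  congr 1
  set F : ℕ → ℝ → ℝ := fun m x => x ^ (2 * (n + m)) / (2 * (m : ℝ) + 1) ^ k with hF
  have hInt : ∀ m : ℕ, Integrable (F m) (volume.restrict (Set.Ioc (0:ℝ) 1)) :=
    fun m => ((continuous_pow _).div_const _).integrableOn_Ioc
  have hval : ∀ m : ℕ, ∫ x in Set.Ioc (0:ℝ) 1, F m x
      = 1 / ((2 * (m : ℝ) + 1) ^ k * (2 * (((m + n : ℕ)) : ℝ) + 1)) := by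
    intro m
    rw [hF]
    simp only
    rw [integral_div, integral_Ioc_pow]
    rw [div_div]
    congr 1
    push_cast
    ring
  have hnorm : ∀ m : ℕ, (∫ x in Set.Ioc (0:ℝ) 1, ‖F m x‖)
      = 1 / ((2 * (m : ℝ) + 1) ^ k * (2 * (((m + n : ℕ)) : ℝ) + 1)) := by
    intro m
    rw [← hval m]
    apply MeasureTheory.setIntegral_congr_fun measurableSet_Ioc
    intro x hx
    have hx0 : 0 < x := hx.1
    have : 0 ≤ F m x := by rw [hF]; positivity
    simp [Real.norm_eq_abs, abs_of_nonneg this]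
  have hSum : Summable (fun m : ℕ => ∫ x in Set.Ioc (0:ℝ) 1, ‖F m x‖) := by
    rw [funext hnorm]
    apply Summable.of_nonneg_of_le (fun m => by positivity) (fun m => ?_) (summable_odd_pow hk)
    rw [div_le_div_iff₀ (by positivity) (by positivity)]
    have h1 : (1:ℝ) ≤ 2 * (((m + n : ℕ)) : ℝ) + 1 := by
      have : (0:ℝ) ≤ ((m + n : ℕ) : ℝ) := Nat.cast_nonneg _
      linarith
    nlinarith [pow_pos (show (0:ℝ) < 2*(m:ℝ)+1 by positivity) k]
  rw [← MeasureTheory.integral_tsum_of_summable_integral_norm hInt hSum]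
  exact tsum_congr hval

theorem stmt10 (n k : ℕ) (hn : 0 < n) (hk : 2 ≤ k) :
    ∫ x in (0:ℝ)..1, x ^ (2 * n - 1) * Afun k x
      = (∑ j ∈ Finset.Icc 1 (k - 1), (-1 : ℝ) ^ (j - 1) * Tval (k + 1 - j) / (2 * (n : ℝ)) ^ j)
        + (-1 : ℝ) ^ (k - 1) * Tn1 n / (2 * (n : ℝ)) ^ k := by
  obtain ⟨K, rfl⟩ : ∃ K, k = K + 1 := ⟨k - 1, by omega⟩
  have hK : 1 ≤ K := by omega
  rw [integral_eq n (K + 1) hn hk]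
  set c : ℝ := 2 * (n : ℝ) with hcdef
  have hc0 : (0:ℝ) < c := by
    have : (1:ℝ) ≤ (n:ℝ) := by exact_mod_cast hn
    rw [hcdef]; linarith
  have hc : c ≠ 0 := ne_of_gt hc0
  have ha : ∀ m : ℕ, (0:ℝ) < 2 * (m : ℝ) + 1 := fun m => by positivity
  have hacast : ∀ m : ℕ, (2 * (((m + n : ℕ)) : ℝ) + 1) = (2 * (m : ℝ) + 1) + c := by
    intro m; rw [hcdef]; push_cast; ring
  set A : ℕ → ℕ → ℝ := fun i m => ((-1:ℝ) ^ i / c ^ (i+1)) * (1 / (2 * (m : ℝ) + 1) ^ (K + 1 - i))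
    with hA
  set B : ℕ → ℝ := fun m => ((-1:ℝ) ^ K / c ^ (K+1)) *
      (1 / (2 * (m : ℝ) + 1) - 1 / (2 * (((m + n : ℕ)) : ℝ) + 1)) with hB
  have hH : ∀ m : ℕ, 1 / ((2 * (m : ℝ) + 1) ^ (K+1) * (2 * (((m + n : ℕ)) : ℝ) + 1))
      = (∑ i ∈ Finset.range K, A i m) + B m := by
    intro m
    rw [hacast m]
    rw [partial_frac (2 * (m : ℝ) + 1) c (ne_of_gt (ha m)) hc
      (by have := ha m; linarith) K]
    congr 1
    · apply Finset.sum_congr rfl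
      intro i hi
      rw [hA]
      simp only
      rw [div_mul_div_comm, mul_one]
    · rw [hB]
      simp only
      rw [hacast m]
  rw [tsum_congr hH]
  have hAsummable : ∀ i ∈ Finset.range K, Summable (fun m => A i m) := by
    intro i hi
    rw [hA]
    exact (summable_odd_pow (by simp at hi; omega)).mul_left _
  have hBsummable : Summable B :=
    ((telescope_hasSum n).mul_left ((-1:ℝ) ^ K / c ^ (K+1))).summable
  rw [Summable.tsum_add (summable_sum hAsummable) hBsummable, Summable.tsum_finsetSum hAsummable]
  have hAval : ∀ i ∈ Finset.range K, ∑' m, A i m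
      = ((-1:ℝ) ^ i / c ^ (i+1)) * (Tval (K + 1 - i) / 2) := by
    intro i hi
    rw [hA]
    simp only
    rw [tsum_mul_left]
    congr 1
    rw [Tval]
    ring
  have hBval : ∑' m, B m = ((-1:ℝ) ^ K / c ^ (K+1)) * (Tn1 n / 2) := by
    rw [hB]
    simp only
    rw [tsum_mul_left,
      ((telescope_hasSum n).tsum_eq)]
    congr 1
    rw [Tn1]
    rw [← Finset.Ico_add_one_right_eq_Icc, Finset.sum_Ico_eq_sum_range]
    have : ∀ i ∈ Finset.range n, (1:ℝ) / (2 * ((1 + i : ℕ) : ℝ) - 1) = 1 / (2 * (i:ℝ) + 1) := by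
      intro i _
      push_cast
      ring_nf
    simp only [Nat.add_sub_cancel]
    rw [Finset.sum_congr rfl this]
    ring
  rw [Finset.sum_congr rfl hAval, hBval]
  -- now pure algebra
  have hIcc : ∑ j ∈ Finset.Icc 1 (K + 1 - 1), (-1 : ℝ) ^ (j - 1) * Tval (K + 1 + 1 - j) / c ^ j
      = ∑ i ∈ Finset.range K, (-1 : ℝ) ^ i * Tval (K + 1 - i) / c ^ (i + 1) := by
    simp only [Nat.add_sub_cancel]
    rw [← Finset.Ico_add_one_right_eq_Icc, Finset.sum_Ico_eq_sum_range]
    simp only [Nat.add_sub_cancel]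
    apply Finset.sum_congr rfl
    intro i hi
    have h1 : 1 + i - 1 = i := by omega
    have h2 : K + 1 + 1 - (1 + i) = K + 1 - i := by omega
    rw [h1, h2, add_comm 1 i]
  rw [hIcc, mul_add, Finset.mul_sum]
  congr 1
  · apply Finset.sum_congr rfl
    intro i hi
    ring
  · simp only [Nat.add_sub_cancel]
    ring
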